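/- Prefix characterization via Cartier-Foata decompositions: for traces u, v ∈ M(Σ, I) with Cartier-Foata decompositions u = c₁ → … → c_n and v = d₁ → … → d_p, one has u ≤ v if and only if n ≤ p and there exist cliques γ₁, …, γ_n such that d_i = c_i · γ_i for 1 ≤ i ≤ n, and γ_i ∥ c_j for all 1 ≤ i ≤ j ≤ n. Moreover, this sequence (γ_i) is unique. -/

import Mathlib

open scoped Classical

/-- A clique of the independence graph `(Σ, I)`. -/
def IsCliq {α : Type*} (I : α → α → Prop) (c : Finset α) : Prop :=
  ∀ a ∈ c, ∀ b ∈ c, a ≠ b → I a b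

/-- Cartier–Foata admissibility `c → c'`. -/
def CFadm {α : Type*} (I : α → α → Prop) (c c' : Finset α) : Prop :=
  ∀ b ∈ c', ∃ a ∈ c, ¬ I a b

/-- Parallelism of cliques `c ∥ c'`, i.e. `c × c' ⊆ I`. -/
def Par {α : Type*} (I : α → α → Prop) (c c' : Finset α) : Prop :=
  ∀ a ∈ c, ∀ b ∈ c', I a b

/-- The commutation relation `ab = ba` for `(a,b) ∈ I`, generating the trace
monoid congruence on the free monoid. -/
def traceRel {α : Type*} (I : α → α → Prop) : FreeMonoid α → FreeMonoid α → Prop :=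
  fun x y => ∃ a b, I a b ∧ x = FreeMonoid.of a * FreeMonoid.of b ∧
    y = FreeMonoid.of b * FreeMonoid.of a

/-- The trace monoid `M(Σ, I) = Σ* / R`. -/
abbrev TM {α : Type*} (I : α → α → Prop) := Con.Quotient (conGen (traceRel I))

/-- Canonical projection from the free monoid onto the trace monoid. -/
def mkTM {α : Type*} (I : α → α → Prop) : FreeMonoid α →* TM I := Con.mk' _

/-- The image of a letter in the trace monoid. -/
def emb {α : Type*} (I : α → α → Prop) (a : α) : TM I := mkTM I (FreeMonoid.of a)

/-- The trace associated to a clique (product of its letters in some enumeration). -/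
noncomputable def ctr {α : Type*} (I : α → α → Prop) (c : Finset α) : TM I :=
  mkTM I ((c.toList.map FreeMonoid.of).prod)

/-- The prefix (left divisibility) order on traces: `u ≤ v ↔ ∃ w, v = u·w`. -/
def pref {α : Type*} (I : α → α → Prop) (u v : TM I) : Prop := ∃ w, v = u * w

namespace CFwork

variable {α : Type*} (I : α → α → Prop)

/-- image of a list in the trace monoid -/
def mkw (l : List α) : TM I := mkTM I (FreeMonoid.ofList l)

variable {I}

lemma mkw_append (x y : List α) : mkw I (x ++ y) = mkw I x * mkw I y := by
  simp [mkw, FreeMonoid.ofList_append, map_mul]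

lemma mkw_cons (a : α) (x : List α) : mkw I (a :: x) = emb I a * mkw I x := by
  simp [mkw, emb, FreeMonoid.ofList_cons, map_mul]

lemma mkw_nil : mkw I ([] : List α) = 1 := by
  simp [mkw]

lemma mk_eq_iff {x y : FreeMonoid α} :
    mkTM I x = mkTM I y ↔ conGen (traceRel I) x y := by
  constructor
  · intro h; exact (Con.eq _).1 h
  · intro h; exact (Con.eq _).2 h

lemma mkw_eq_iff {x y : List α} :
    mkw I x = mkw I y ↔ conGen (traceRel I) (FreeMonoid.ofList x) (FreeMonoid.ofList y) :=
  mk_eq_iff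

lemma mkw_surjective (t : TM I) : ∃ l : List α, mkw I l = t := by
  obtain ⟨x, rfl⟩ := Con.mk'_surjective (c := conGen (traceRel I)) t
  exact ⟨FreeMonoid.toList x, by simp [mkw, mkTM]⟩

lemma ctr_eq_mkw (c : Finset α) : ctr I c = mkw I c.toList := by
  unfold ctr mkw
  congr 1
  induction c.toList with
  | nil => rfl
  | cons a l ih => simp [FreeMonoid.ofList_cons, ih]

/-- swap of two adjacent independent letters, in context -/
lemma mkw_swap (h : I a b) (x y : List α) :
    mkw I (x ++ a :: b :: y) = mkw I (x ++ b :: a :: y) := by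
  rw [mkw_eq_iff]
  have : conGen (traceRel I) (FreeMonoid.ofList [a, b]) (FreeMonoid.ofList [b, a]) :=
    ConGen.Rel.of _ _ ⟨a, b, h, rfl, rfl⟩
  have hx : (conGen (traceRel I)) (FreeMonoid.ofList x * (FreeMonoid.ofList [a,b] * FreeMonoid.ofList y))
      (FreeMonoid.ofList x * (FreeMonoid.ofList [b,a] * FreeMonoid.ofList y)) :=
    (conGen (traceRel I)).mul (Con.refl _ _) ((conGen (traceRel I)).mul this (Con.refl _ _))
  simpa [FreeMonoid.ofList_append, FreeMonoid.ofList_cons, mul_assoc] using hx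

end CFwork

namespace CFwork
variable {α : Type*} {I : α → α → Prop}

/-- a letter independent from everything in l₁ moves to the front -/
lemma mkw_pull (hs : ∀ a b, I a b → I b a) {a : α} {l₁ : List α}
    (h : ∀ b ∈ l₁, I a b) (l₂ : List α) :
    mkw I (l₁ ++ a :: l₂) = mkw I (a :: (l₁ ++ l₂)) := by
  induction l₁ with
  | nil => rfl
  | cons b l ih =>
    have h1 : mkw I ((b :: l) ++ a :: l₂) = mkw I (b :: a :: (l ++ l₂)) := by
      have := ih (fun b hb => h b (List.mem_cons_of_mem _ hb))
      calc mkw I (b :: (l ++ a :: l₂)) = emb I b * mkw I (l ++ a :: l₂) := mkw_cons ..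
        _ = emb I b * mkw I (a :: (l ++ l₂)) := by rw [this]
        _ = mkw I (b :: a :: (l ++ l₂)) := (mkw_cons ..).symm
    rw [show ((b :: l) ++ a :: l₂ : List α) = b :: (l ++ a :: l₂) by simp] at *
    rw [h1]
    have := mkw_swap (hs a b (h b (List.mem_cons_self))) ([] : List α) (l ++ l₂)
    simpa using this

/-- fully independent blocks commute -/
lemma mkw_comm (hs : ∀ a b, I a b → I b a) {x y : List α}
    (h : ∀ a ∈ x, ∀ b ∈ y, I a b) :
    mkw I (x ++ y) = mkw I (y ++ x) := by
  induction x generalizing y with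
  | nil => simp
  | cons a x ih =>
    have ha : ∀ b ∈ y, I a b := fun b hb => h a List.mem_cons_self b hb
    calc mkw I ((a :: x) ++ y) = mkw I (a :: (x ++ y)) := by simp
      _ = mkw I (a :: (y ++ x)) := by
          rw [mkw_cons, mkw_cons, ih (fun a' ha' b hb => h a' (List.mem_cons_of_mem _ ha') b hb)]
      _ = mkw I (y ++ a :: x) := (mkw_pull hs ha x).symm

/-- permutations of pairwise independent letters don't change the trace -/
lemma mkw_perm (hs : ∀ a b, I a b → I b a) {x y : List α} (hp : x.Perm y)
    (h : ∀ a ∈ x, ∀ b ∈ x, a ≠ b → I a b) :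
    mkw I x = mkw I y := by
  induction hp with
  | nil => rfl
  | cons a hp ih =>
    rw [mkw_cons, mkw_cons, ih (fun a' ha' b hb hne => h a' (by simp [ha']) b (by simp [hb]) hne)]
  | swap a b l =>
    by_cases hab : a = b
    · subst hab; rfl
    · have := mkw_swap (h b (by simp) a (by simp) (Ne.symm hab)) ([] : List α) l
      simpa using this
  | trans p1 p2 ih1 ih2 =>
    rw [ih1 h, ih2 (fun a ha b hb hne => h a (p1.mem_iff.2 ha) b (p1.mem_iff.2 hb) hne)]

end CFwork

namespace CFwork
variable {α : Type*} {I : α → α → Prop}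

/-- multiset abelianization -/
def muW : FreeMonoid α →* Multiplicative (Multiset α) where
  toFun x := Multiplicative.ofAdd (↑(FreeMonoid.toList x) : Multiset α)
  map_one' := rfl
  map_mul' x y := by
    simp only [FreeMonoid.toList_mul, ← Multiset.coe_add]
    rfl

lemma mkw_multiset {x y : List α} (h : mkw I x = mkw I y) :
    (x : Multiset α) = (y : Multiset α) := by
  have hle : conGen (traceRel I) ≤ Con.ker muW := by
    apply Con.conGen_le.2
    rintro u v ⟨a, b, hI, rfl, rfl⟩
    rw [Con.ker_rel]
    have : (FreeMonoid.toList (FreeMonoid.of a * FreeMonoid.of b) : Multiset α)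
        = (FreeMonoid.toList (FreeMonoid.of b * FreeMonoid.of a) : Multiset α) := by
      rw [Multiset.coe_eq_coe]
      exact List.Perm.swap _ _ _
    exact congrArg Multiplicative.ofAdd this
  have := hle ((mkw_eq_iff).1 h)
  rw [Con.ker_rel] at this
  exact Multiplicative.ofAdd.injective this

/-- projection to a pair of letters -/
def projW (p : α → Bool) : FreeMonoid α →* FreeMonoid α where
  toFun x := FreeMonoid.ofList ((FreeMonoid.toList x).filter p)
  map_one' := rfl
  map_mul' x y := by
    simp [FreeMonoid.toList_mul, List.filter_append, FreeMonoid.ofList_append]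

lemma proj_invariant (hs : ∀ a b, I a b → I b a) {a b : α} (hab : a = b ∨ ¬ I a b)
    {x y : List α} (h : mkw I x = mkw I y) :
    x.filter (fun c => decide (c = a ∨ c = b)) = y.filter (fun c => decide (c = a ∨ c = b)) := by
  set p : α → Bool := fun c => decide (c = a ∨ c = b) with hp
  have hle : conGen (traceRel I) ≤ Con.ker (projW p) := by
    apply Con.conGen_le.2
    rintro u v ⟨a', b', hI, rfl, rfl⟩
    rw [Con.ker_rel]
    have hl : FreeMonoid.toList (FreeMonoid.of a' * FreeMonoid.of b') = [a', b'] := rfl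
    have hl' : FreeMonoid.toList (FreeMonoid.of b' * FreeMonoid.of a') = [b', a'] := rfl
    unfold projW
    show FreeMonoid.ofList (List.filter p [a', b']) = FreeMonoid.ofList (List.filter p [b', a'])
    congr 1
    by_cases h1 : p a' = true <;> by_cases h2 : p b' = true
    · have ha' : a' = a ∨ a' = b := by simpa [hp] using h1
      have hb' : b' = a ∨ b' = b := by simpa [hp] using h2
      have heq : a' = b' := by
        rcases hab with rfl | hnI
        · rcases ha' with rfl | rfl <;> rcases hb' with rfl | rfl <;> rfl
        · rcases ha' with rfl | rfl <;> rcases hb' with rfl | rfl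
          · rfl
          · exact absurd hI hnI
          · exact absurd (hs _ _ hI) hnI
          · rfl
      subst heq
      rfl
    · simp [List.filter, h1, h2]
    · simp [List.filter, h1, h2]
    · simp [List.filter, h1, h2]
  have := hle ((mkw_eq_iff).1 h)
  rw [Con.ker_rel] at this
  unfold projW at this
  simp only [MonoidHom.coe_mk, OneHom.coe_mk, FreeMonoid.toList_ofList] at this
  exact FreeMonoid.ofList.injective this

lemma exists_first {a : α} {l : List α} (h : a ∈ l) :
    ∃ s t, l = s ++ a :: t ∧ a ∉ s := by
  induction l with
  | nil => cases h
  | cons c l ih =>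
    by_cases hca : c = a
    · exact ⟨[], l, by simp [hca], by simp⟩
    · have hal : a ∈ l := by
        rcases List.mem_cons.1 h with h | h
        · exact absurd h.symm hca
        · exact h
      obtain ⟨s, t, rfl, hns⟩ := ih hal
      exact ⟨c :: s, t, rfl, by
        simp only [List.mem_cons]
        rintro (rfl | hm)
        · exact hca rfl
        · exact hns hm⟩

end CFwork

namespace CFwork
variable {α : Type*} {I : α → α → Prop}

lemma filter_head_eq {a : α} {p : α → Bool} (hpa : p a = true)
    {w₁ w₂ z : List α} (hna : a ∉ w₁)
    (hproj : (w₁ ++ a :: w₂).filter p = (a :: z).filter p) :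
    w₁.filter p = [] := by
  cases hw : w₁.filter p with
  | nil => rfl
  | cons c rest =>
    exfalso
    have hc : c ∈ w₁ := List.mem_of_mem_filter (hw ▸ (List.mem_cons_self (a := c) (l := rest)))
    rw [List.filter_append, hw, List.filter_cons_of_pos hpa, List.filter_cons_of_pos hpa]
      at hproj
    have : c = a := by
      have := congrArg (fun l => l.head?) hproj
      simpa using this
    exact hna (this ▸ hc)

/-- key extraction lemma: if `a` is a leading letter of the trace of `w`, then the
first occurrence of `a` in `w` is preceded only by letters independent from `a`. -/
lemma extract1 (hs : ∀ a b, I a b → I b a) {w z : List α} {a : α}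
    (h : mkw I w = mkw I (a :: z)) :
    ∃ w₁ w₂, w = w₁ ++ a :: w₂ ∧ a ∉ w₁ ∧ ∀ b ∈ w₁, I a b := by
  have hmem : a ∈ w := by
    have := mkw_multiset h
    have : a ∈ (w : Multiset α) := by rw [this]; simp
    simpa using this
  obtain ⟨w₁, w₂, rfl, hna⟩ := exists_first hmem
  refine ⟨w₁, w₂, rfl, hna, ?_⟩
  intro b hb
  by_contra hIb
  have hproj := proj_invariant hs (Or.inr hIb) h
  have hpa : (fun c => decide (c = a ∨ c = b)) a = true := by simp
  have hnil := filter_head_eq (a := a) (p := fun c => decide (c = a ∨ c = b)) hpa hna hproj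
  have : b ∈ w₁.filter (fun c => decide (c = a ∨ c = b)) :=
    List.mem_filter.2 ⟨hb, by simp⟩
  rw [hnil] at this
  cases this

/-- the projection lemma: traces are determined by their projections onto
dependent pairs of letters. -/
lemma proj_lemma (hs : ∀ a b, I a b → I b a) : ∀ {x y : List α},
    (∀ a b : α, (a = b ∨ ¬ I a b) →
      x.filter (fun c => decide (c = a ∨ c = b)) = y.filter (fun c => decide (c = a ∨ c = b))) →
    mkw I x = mkw I y := by
  intro x
  induction x with
  | nil =>
    intro y h
    cases y with
    | nil => rfl
    | cons c ys =>
      have := h c c (Or.inl rfl)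
      simp at this
  | cons a x ih =>
    intro y h
    have hay : a ∈ y := by
      have := h a a (Or.inl rfl)
      have ha : a ∈ (a :: x).filter (fun c => decide (c = a ∨ c = a)) := by simp
      rw [this] at ha
      exact List.mem_of_mem_filter ha
    obtain ⟨y₁, y₂, rfl, hna⟩ := exists_first hay
    have hindep : ∀ b ∈ y₁, I a b := by
      intro b hb
      by_contra hIb
      have hproj := (h a b (Or.inr hIb)).symm
      have hpa : (fun c => decide (c = a ∨ c = b)) a = true := by simp
      have hnil := filter_head_eq (a := a) (p := fun c => decide (c = a ∨ c = b)) hpa hna hproj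
      have : b ∈ y₁.filter (fun c => decide (c = a ∨ c = b)) :=
        List.mem_filter.2 ⟨hb, by simp⟩
      rw [hnil] at this
      cases this
    have hxy : mkw I x = mkw I (y₁ ++ y₂) := by
      apply ih
      intro a₀ b₀ hab
      have H := h a₀ b₀ hab
      set p : α → Bool := fun c => decide (c = a₀ ∨ c = b₀) with hp
      by_cases hpa : p a = true
      · have hy₁ : y₁.filter p = [] := by
          rw [List.filter_eq_nil_iff]
          intro b hb hpb
          have hba : b ≠ a := fun e => hna (e ▸ hb)
          have hbp : b = a₀ ∨ b = b₀ := by simpa [hp] using hpb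
          have hap : a = a₀ ∨ a = b₀ := by simpa [hp] using hpa
          have hIab : I a b := hindep b hb
          rcases hab with rfl | hnI
          · rcases hbp with rfl | rfl <;> rcases hap with rfl | rfl <;> exact hba rfl
          · rcases hbp with rfl | rfl <;> rcases hap with rfl | rfl
            · exact hba rfl
            · exact hnI (hs _ _ hIab)
            · exact hnI hIab
            · exact hba rfl
        rw [List.filter_cons_of_pos hpa] at H
        rw [List.filter_append, hy₁, List.filter_cons_of_pos hpa] at H
        rw [List.filter_append, hy₁, List.nil_append]
        exact (List.cons.injEq _ _ _ _ ▸ H).2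
      · rw [List.filter_cons_of_neg (by simpa using hpa)] at H
        rw [List.filter_append, List.filter_cons_of_neg (by simpa using hpa)] at H
        rw [List.filter_append]
        exact H
    calc mkw I (a :: x) = emb I a * mkw I x := mkw_cons ..
      _ = emb I a * mkw I (y₁ ++ y₂) := by rw [hxy]
      _ = mkw I (a :: (y₁ ++ y₂)) := (mkw_cons ..).symm
      _ = mkw I (y₁ ++ a :: y₂) := (mkw_pull hs hindep y₂).symm

lemma mkw_cancel_left (hs : ∀ a b, I a b → I b a) {u x y : List α}
    (h : mkw I (u ++ x) = mkw I (u ++ y)) : mkw I x = mkw I y := by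
  apply proj_lemma hs
  intro a b hab
  have := proj_invariant hs hab h
  rw [List.filter_append, List.filter_append] at this
  exact List.append_cancel_left this

lemma cancel_left (hs : ∀ a b, I a b → I b a) {t x y : TM I}
    (h : t * x = t * y) : x = y := by
  obtain ⟨lt, rfl⟩ := mkw_surjective t
  obtain ⟨lx, rfl⟩ := mkw_surjective x
  obtain ⟨ly, rfl⟩ := mkw_surjective y
  rw [← mkw_append, ← mkw_append] at h
  exact mkw_cancel_left hs h

end CFwork

namespace CFwork
variable {α : Type*} {I : α → α → Prop}

lemma afree_prefix {a : α} {w₁ w₂ p q : List α} (he : p ++ q = w₁ ++ a :: w₂)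
    (hp : a ∉ p) (hw : a ∉ w₁) : ∃ r, w₁ = p ++ r ∧ q = r ++ a :: w₂ := by
  rcases List.append_eq_append_iff.1 he with ⟨r, hr1, hr2⟩ | ⟨r, hr1, hr2⟩
  · exact ⟨r, hr1, hr2⟩
  · cases r with
    | nil => exact ⟨[], by simpa using hr1.symm, by simpa using hr2.symm⟩
    | cons c cs =>
      exfalso
      have hc : c = a := by
        have := congrArg (fun l => l.head?) hr2
        simpa using this.symm
      exact hp (hr1 ▸ List.mem_append_right w₁ (by simp [hc]))

/-- the word of a concatenated clique sequence -/
noncomputable def Jn (lc : List (Finset α)) : List α := (lc.map Finset.toList).flatten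

lemma Jn_nil : Jn ([] : List (Finset α)) = [] := rfl

lemma Jn_cons (c : Finset α) (lc : List (Finset α)) : Jn (c :: lc) = c.toList ++ Jn lc := rfl

lemma Jn_append (l₁ l₂ : List (Finset α)) : Jn (l₁ ++ l₂) = Jn l₁ ++ Jn l₂ := by
  simp [Jn]

lemma mem_Jn {b : α} {lc : List (Finset α)} : b ∈ Jn lc ↔ ∃ c ∈ lc, b ∈ c := by
  simp [Jn, List.mem_flatten]

lemma prod_map_ctr (lc : List (Finset α)) : (lc.map (ctr I)).prod = mkw I (Jn lc) := by
  induction lc with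
  | nil => simp [Jn_nil, mkw_nil]
  | cons c lc ih => rw [List.map_cons, List.prod_cons, ih, Jn_cons, mkw_append, ctr_eq_mkw]

lemma mkw_eq_one {l : List α} (h : mkw I l = 1) : l = [] := by
  have : mkw I l = mkw I [] := by rw [h, mkw_nil]
  have := mkw_multiset this
  simpa using this

lemma ctr_singleton (a : α) : ctr I {a} = emb I a := by
  rw [ctr_eq_mkw]
  have : ({a} : Finset α).toList = [a] := Finset.toList_singleton a
  rw [this]
  simp [mkw_cons, mkw_nil]

lemma ctr_inj {c c' : Finset α} (h : ctr I c = ctr I c') : c = c' := by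
  rw [ctr_eq_mkw, ctr_eq_mkw] at h
  have := mkw_multiset h
  rw [Finset.coe_toList, Finset.coe_toList] at this
  exact Finset.val_inj.1 this

lemma ctr_split (hs : ∀ a b, I a b → I b a) {c d : Finset α} (hsub : c ⊆ d)
    (hcliq : IsCliq I d) : ctr I d = ctr I c * ctr I (d \ c) := by
  classical
  have hperm : d.toList.Perm (c.toList ++ (d \ c).toList) := by
    rw [← Multiset.coe_eq_coe]
    rw [show ((c.toList ++ (d \ c).toList : List α) : Multiset α)
        = (c.toList : Multiset α) + ((d \ c).toList : Multiset α) from rfl]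
    rw [Finset.coe_toList, Finset.coe_toList, Finset.coe_toList, Finset.sdiff_val]
    have hle : c.val ≤ d.val := Finset.val_le_iff.2 hsub
    exact (add_tsub_cancel_of_le hle).symm
  rw [ctr_eq_mkw, ctr_eq_mkw, ctr_eq_mkw, ← mkw_append]
  exact mkw_perm hs hperm (fun a ha b hb hne =>
    hcliq a (Finset.mem_toList.1 ha) b (Finset.mem_toList.1 hb) hne)

end CFwork

namespace CFwork
variable {α : Type*} {I : α → α → Prop}

lemma key_parts (hs : ∀ a b, I a b → I b a) {lc : List (Finset α)}
    (hch : lc.Chain' (CFadm I)) {Y z : List α} {a : α}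
    (hEq : mkw I (Jn lc ++ Y) = mkw I (a :: z)) :
    ((∃ c ∈ lc, a ∈ c) → a ∈ lc.getD 0 ∅) ∧
    ((∀ c ∈ lc, a ∉ c) → ∀ b ∈ Jn lc, I a b) := by
  obtain ⟨w₁, w₂, he, hna, hind⟩ := extract1 hs hEq
  constructor
  · rintro ⟨c, hc, hac⟩
    obtain ⟨i0, hi0, hgi0⟩ := List.mem_iff_getElem.1 hc
    have hP : ∃ i, i < lc.length ∧ a ∈ lc.getD i ∅ :=
      ⟨i0, hi0, by rw [List.getD_eq_getElem _ _ hi0, hgi0]; exact hac⟩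
    classical
    obtain ⟨hj, haj⟩ := Nat.find_spec hP
    rcases hjd : Nat.find hP with _ | k
    · rw [hjd] at haj
      exact haj
    · exfalso
      rw [hjd] at hj haj
      have hchain := List.isChain_iff_getElem.1 hch k (by omega)
      rw [List.getD_eq_getElem _ _ hj] at haj
      obtain ⟨b, hb, hnIb⟩ := hchain a haj
      -- the prefix of blocks up to index k+1 contains no a
      have hanotake : a ∉ Jn (lc.take (k + 1)) := by
        intro hm
        obtain ⟨c', hc', hac'⟩ := mem_Jn.1 hm
        obtain ⟨m, hm', hgm⟩ := List.mem_iff_getElem.1 hc'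
        have hmlt : m < k + 1 := lt_of_lt_of_le hm' (by simp [List.length_take])
        have hmlc : m < lc.length := lt_of_lt_of_le hm' (by simp [List.length_take])
        have hgm' : lc[m] = c' := by rw [← hgm]; exact (List.getElem_take).symm
        refine Nat.find_min hP (hjd ▸ hmlt) ⟨hmlc, ?_⟩
        rw [List.getD_eq_getElem _ _ hmlc, hgm']
        exact hac'
      have he' : Jn (lc.take (k + 1)) ++ (Jn (lc.drop (k + 1)) ++ Y) = w₁ ++ a :: w₂ := by
        rw [← List.append_assoc, ← Jn_append, List.take_append_drop]; exact he
      obtain ⟨r, hw₁, -⟩ := afree_prefix he' hanotake hna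
      have hbmem : b ∈ Jn (lc.take (k + 1)) := by
        apply mem_Jn.2
        refine ⟨lc[k], ?_, hb⟩
        have hkl : k < (lc.take (k+1)).length := by simp [List.length_take]; omega
        have : (lc.take (k+1))[k] = lc[k] := List.getElem_take
        exact this ▸ List.getElem_mem hkl
      have : I a b := hind b (hw₁ ▸ List.mem_append_left r hbmem)
      exact hnIb (hs _ _ this)
  · intro hnot b hb
    have hnJn : a ∉ Jn lc := fun hm => by
      obtain ⟨c, hc, hac⟩ := mem_Jn.1 hm
      exact hnot c hc hac
    obtain ⟨r, hw₁, -⟩ := afree_prefix he hnJn hna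
    exact hind b (hw₁ ▸ List.mem_append_left r hb)

end CFwork

namespace CFwork
variable {α : Type*} {I : α → α → Prop}

lemma emb_comm_Jn (hs : ∀ a b, I a b → I b a) {a : α} {lc' : List (Finset α)}
    (h : ∀ b ∈ Jn lc', I a b) :
    emb I a * mkw I (Jn lc') = mkw I (Jn lc') * emb I a := by
  have := mkw_comm hs (x := [a]) (y := Jn lc')
    (by intro a' ha' b hb; rcases List.mem_singleton.1 ha' with rfl; exact h b hb)
  rw [mkw_append, mkw_append, mkw_cons, mkw_nil] at this
  simpa using this

lemma peel (hs : ∀ a b, I a b → I b a) (hirr : ∀ a, ¬ I a a) :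
    ∀ (g : List α) (lc' : List (Finset α)) (D' w : TM I),
    (∀ a ∈ g, ∀ b ∈ Jn lc', I a b) →
    mkw I g * D' = mkw I (Jn lc') * w →
    ∃ w', D' = mkw I (Jn lc') * w' := by
  intro g
  induction g with
  | nil =>
    intro lc' D' w _ heq
    exact ⟨w, by simpa [mkw_nil] using heq⟩
  | cons a g ih =>
    intro lc' D' w hind heq
    obtain ⟨Y, rfl⟩ := mkw_surjective w
    obtain ⟨dw, rfl⟩ := mkw_surjective D'
    have heq' : mkw I (Jn lc' ++ Y) = mkw I (a :: (g ++ dw)) := by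
      rw [mkw_append, ← heq, mkw_cons, mkw_cons, mkw_append, mul_assoc]
    obtain ⟨w₁, w₂, he, hna, hindw⟩ := extract1 hs heq'
    have hanJn : a ∉ Jn lc' := fun hm => hirr a (hind a (by simp) a hm)
    obtain ⟨r, hw₁, hY⟩ := afree_prefix he hanJn hna
    have hrind : ∀ b ∈ r, I a b := fun b hb => hindw b (hw₁ ▸ List.mem_append_right _ hb)
    have hwform : mkw I Y = emb I a * mkw I (r ++ w₂) := by
      rw [hY, mkw_pull hs hrind w₂, mkw_cons]
    have hcomm := emb_comm_Jn hs (a := a) (lc' := lc') (hind a (by simp))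
    have hmain : emb I a * (mkw I g * mkw I dw)
        = emb I a * (mkw I (Jn lc') * mkw I (r ++ w₂)) := by
      calc emb I a * (mkw I g * mkw I dw) = mkw I (a :: g) * mkw I dw := by
            rw [mkw_cons, mul_assoc]
        _ = mkw I (Jn lc') * mkw I Y := heq
        _ = mkw I (Jn lc') * (emb I a * mkw I (r ++ w₂)) := by rw [hwform]
        _ = emb I a * (mkw I (Jn lc') * mkw I (r ++ w₂)) := by
            rw [← mul_assoc, ← hcomm, mul_assoc]
    have hcan := cancel_left hs hmain
    exact ih lc' (mkw I dw) (mkw I (r ++ w₂))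
      (fun a' ha' => hind a' (by simp [ha'])) hcan

lemma ctr_comm_prod (hs : ∀ a b, I a b → I b a) {g : Finset α} {lc' : List (Finset α)}
    (h : ∀ a ∈ g, ∀ b ∈ Jn lc', I a b) :
    ctr I g * (lc'.map (ctr I)).prod = (lc'.map (ctr I)).prod * ctr I g := by
  rw [prod_map_ctr, ctr_eq_mkw, ← mkw_append, ← mkw_append]
  exact mkw_comm hs (fun a ha b hb => h a (Finset.mem_toList.1 ha) b hb)

lemma main_back (hs : ∀ a b, I a b → I b a) :
    ∀ (lc ld γ : List (Finset α)),
    γ.length = lc.length → lc.length ≤ ld.length →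
    (∀ i < lc.length, ctr I (ld.getD i ∅) = ctr I (lc.getD i ∅) * ctr I (γ.getD i ∅)) →
    (∀ i j : ℕ, i ≤ j → j < lc.length → Par I (γ.getD i ∅) (lc.getD j ∅)) →
    pref I ((lc.map (ctr I)).prod) ((ld.map (ctr I)).prod) := by
  intro lc
  induction lc with
  | nil => intro ld γ _ _ _ _; exact ⟨(ld.map (ctr I)).prod, (one_mul _).symm⟩
  | cons c lc' ih =>
    intro ld γ hlen hle hprod hpar
    cases ld with
    | nil => simp at hle
    | cons d ld' =>
      cases γ with
      | nil => simp at hlen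
      | cons g γ' =>
        obtain ⟨t, ht⟩ := ih ld' γ' (by simpa using hlen) (by simpa using hle)
          (fun i hi => by
            have := hprod (i + 1) (by simpa using Nat.succ_lt_succ hi)
            simpa [List.getD_cons_succ] using this)
          (fun i j hij hj => by
            have := hpar (i + 1) (j + 1) (Nat.succ_le_succ hij) (by simpa using Nat.succ_lt_succ hj)
            simpa [List.getD_cons_succ] using this)
        have h0 := hprod 0 (by simp)
        simp only [List.getD_cons_zero] at h0
        have hgcomm : ctr I g * (lc'.map (ctr I)).prod = (lc'.map (ctr I)).prod * ctr I g := by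
          apply ctr_comm_prod hs
          intro a ha b hb
          obtain ⟨c'', hc'', hb''⟩ := mem_Jn.1 hb
          obtain ⟨k, hk, hgk⟩ := List.mem_iff_getElem.1 hc''
          have := hpar 0 (k + 1) (Nat.zero_le _) (by simpa using Nat.succ_lt_succ hk)
          simp only [List.getD_cons_zero, List.getD_cons_succ] at this
          rw [List.getD_eq_getElem _ _ hk, hgk] at this
          exact this a ha b hb''
        refine ⟨ctr I g * t, ?_⟩
        calc ((d :: ld').map (ctr I)).prod = ctr I d * (ld'.map (ctr I)).prod := by simp
          _ = ctr I c * ctr I g * ((lc'.map (ctr I)).prod * t) := by rw [h0, ht]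
          _ = ctr I c * (ctr I g * (lc'.map (ctr I)).prod) * t := by
              rw [mul_assoc, mul_assoc, mul_assoc]
          _ = ctr I c * ((lc'.map (ctr I)).prod * ctr I g) * t := by rw [hgcomm]
          _ = ((c :: lc').map (ctr I)).prod * (ctr I g * t) := by
              simp [mul_assoc]

end CFwork

namespace CFwork
variable {α : Type*} {I : α → α → Prop}

lemma mkw_mem_iff {x y : List α} (h : mkw I x = mkw I y) {a : α} : a ∈ x ↔ a ∈ y := by
  have := mkw_multiset h
  constructor <;> intro hm
  · have : a ∈ (x : Multiset α) := by simpa using hm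
    rw [mkw_multiset h] at this; simpa using this
  · have : a ∈ (y : Multiset α) := by simpa using hm
    rw [← mkw_multiset h] at this; simpa using this

lemma main_exists (hs : ∀ a b, I a b → I b a) (hirr : ∀ a, ¬ I a a) :
    ∀ (lc ld : List (Finset α)),
    (∀ c ∈ lc, c.Nonempty ∧ IsCliq I c) → lc.Chain' (CFadm I) →
    (∀ c ∈ ld, c.Nonempty ∧ IsCliq I c) → ld.Chain' (CFadm I) →
    pref I ((lc.map (ctr I)).prod) ((ld.map (ctr I)).prod) →
    lc.length ≤ ld.length ∧
      ∃ γ : List (Finset α), γ.length = lc.length ∧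
        (∀ i < lc.length, IsCliq I (γ.getD i ∅) ∧
          ctr I (ld.getD i ∅) = ctr I (lc.getD i ∅) * ctr I (γ.getD i ∅)) ∧
        (∀ i j : ℕ, i ≤ j → j < lc.length → Par I (γ.getD i ∅) (lc.getD j ∅)) := by
  intro lc
  induction lc with
  | nil =>
    intro ld _ _ _ _ _
    exact ⟨Nat.zero_le _, [], rfl, fun i hi => absurd hi (Nat.not_lt_zero i),
      fun i j _ hj => absurd hj (Nat.not_lt_zero j)⟩
  | cons c₁ lc' ih =>
    intro ld hlc hcc hld hcd hpref
    obtain ⟨w, hw⟩ := hpref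
    obtain ⟨Y, rfl⟩ := mkw_surjective w
    cases ld with
    | nil =>
      exfalso
      have h1 : mkw I ([] : List α) = mkw I (Jn (c₁ :: lc') ++ Y) := by
        rw [mkw_nil]
        rw [show (List.map (ctr I) [] ).prod = (1 : TM I) by simp] at hw
        rw [mkw_append, ← prod_map_ctr]
        exact hw
      have := mkw_multiset h1
      have hc₁ : c₁.Nonempty := (hlc c₁ (by simp)).1
      obtain ⟨a, ha⟩ := hc₁
      have : a ∈ ([] : List α) := (mkw_mem_iff h1).2 (by
        rw [Jn_cons]
        exact List.mem_append_left _ (List.mem_append_left _ (Finset.mem_toList.2 ha)))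
      cases this
    | cons d₁ ld' =>
      have hc₁cliq : IsCliq I c₁ := (hlc c₁ (by simp)).2
      have hd₁cliq : IsCliq I d₁ := (hld d₁ (by simp)).2
      -- Step 1: c₁ ⊆ d₁
      have hsub : c₁ ⊆ d₁ := by
        intro a ha
        have hsplit := ctr_split hs (Finset.singleton_subset_iff.2 ha) hc₁cliq
        rw [ctr_singleton] at hsplit
        obtain ⟨z, hz⟩ := mkw_surjective
          (ctr I (c₁ \ {a}) * ((lc'.map (ctr I)).prod * mkw I Y))
        have hEq : mkw I (Jn (d₁ :: ld') ++ []) = mkw I (a :: z) := by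
          rw [List.append_nil, ← prod_map_ctr, hw, mkw_cons, hz]
          simp only [List.map_cons, List.prod_cons, hsplit]
          rw [mul_assoc, mul_assoc]
        have hain : a ∈ Jn (d₁ :: ld') := by
          have := (mkw_mem_iff hEq).2 List.mem_cons_self
          simpa using this
        obtain ⟨c, hc, hac⟩ := mem_Jn.1 hain
        have := (key_parts hs hcd hEq).1 ⟨c, hc, hac⟩
        rw [List.getD_cons_zero] at this
        exact this
      set γ₁ := d₁ \ c₁ with hγ₁
      have hd₁split : ctr I d₁ = ctr I c₁ * ctr I γ₁ := ctr_split hs hsub hd₁cliq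
      -- Step 3: parallelism of γ₁ with all blocks of u
      have hγpar : ∀ a ∈ γ₁, ∀ b ∈ Jn (c₁ :: lc'), I a b := by
        intro a ha
        have had₁ : a ∈ d₁ := (Finset.mem_sdiff.1 ha).1
        have hanc₁ : a ∉ c₁ := (Finset.mem_sdiff.1 ha).2
        have hsplitd := ctr_split hs (Finset.singleton_subset_iff.2 had₁) hd₁cliq
        rw [ctr_singleton] at hsplitd
        obtain ⟨z', hz'⟩ := mkw_surjective (ctr I (d₁ \ {a}) * ((ld'.map (ctr I)).prod))
        have hEq2 : mkw I (Jn (c₁ :: lc') ++ Y) = mkw I (a :: z') := by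
          rw [mkw_append, ← prod_map_ctr, ← hw, mkw_cons, hz']
          simp only [List.map_cons, List.prod_cons, hsplitd]
          rw [mul_assoc]
        have hkey2 := key_parts hs hcc hEq2
        have hnotany : ∀ c ∈ (c₁ :: lc'), a ∉ c := by
          intro c hc hac
          have := hkey2.1 ⟨c, hc, hac⟩
          rw [List.getD_cons_zero] at this
          exact hanc₁ this
        exact hkey2.2 hnotany
      -- Step 4: cancellation
      have hc : ctr I c₁ * (ctr I γ₁ * (ld'.map (ctr I)).prod)
          = ctr I c₁ * ((lc'.map (ctr I)).prod * mkw I Y) := by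
        have h1 : ((d₁ :: ld').map (ctr I)).prod = ctr I c₁ * (ctr I γ₁ * (ld'.map (ctr I)).prod) := by
          simp only [List.map_cons, List.prod_cons, hd₁split, mul_assoc]
        have h2 : ((c₁ :: lc').map (ctr I)).prod * mkw I Y
            = ctr I c₁ * ((lc'.map (ctr I)).prod * mkw I Y) := by
          simp only [List.map_cons, List.prod_cons, mul_assoc]
        rw [← h1, ← h2]
        exact hw
      have hcan := cancel_left hs hc
      -- Step 5: peel γ₁
      obtain ⟨w', hw'⟩ := peel hs hirr γ₁.toList lc' ((ld'.map (ctr I)).prod) (mkw I Y)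
        (fun a ha b hb => hγpar a (Finset.mem_toList.1 ha) b
          (by rw [Jn_cons]; exact List.mem_append_right _ hb))
        (by rw [← ctr_eq_mkw, ← prod_map_ctr]; exact hcan)
      -- Step 6: induction hypothesis
      obtain ⟨hlen, γ', hγlen, hγprop, hγpar'⟩ := ih ld'
        (fun c hc => hlc c (List.mem_cons_of_mem _ hc)) hcc.tail
        (fun c hc => hld c (List.mem_cons_of_mem _ hc)) hcd.tail
        ⟨w', by rw [hw', prod_map_ctr]⟩
      -- Step 7: assemble
      refine ⟨Nat.succ_le_succ hlen, γ₁ :: γ', by simp [hγlen], ?_, ?_⟩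
      · intro i hi
        cases i with
        | zero =>
          simp only [List.getD_cons_zero]
          refine ⟨?_, hd₁split⟩
          intro a ha b hb hne
          exact hd₁cliq a (Finset.mem_sdiff.1 ha).1 b (Finset.mem_sdiff.1 hb).1 hne
        | succ i =>
          simp only [List.getD_cons_succ]
          exact hγprop i (Nat.lt_of_succ_lt_succ hi)
      · intro i j hij hj
        cases i with
        | zero =>
          intro a ha b hb
          simp only [List.getD_cons_zero] at ha
          apply hγpar a ha
          apply mem_Jn.2
          refine ⟨(c₁ :: lc').getD j ∅, ?_, hb⟩
          rw [List.getD_eq_getElem _ _ (by simpa using hj)]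
          exact List.getElem_mem _
        | succ i =>
          cases j with
          | zero => omega
          | succ j =>
            simp only [List.getD_cons_succ]
            exact hγpar' i j (Nat.le_of_succ_le_succ hij) (Nat.lt_of_succ_lt_succ hj)

end CFwork

/-- Prefix characterization via Cartier–Foata decompositions: `u ≤ v` iff
`n ≤ p` and there is a (unique) sequence of cliques `γ₁, …, γ_n` with
`d_i = c_i·γ_i` and `γ_i ∥ c_j` for `i ≤ j`. -/
theorem prefix_characterization_CF {α : Type*} [Fintype α] (I : α → α → Prop)
    (hsymm : ∀ a b, I a b → I b a) (hirr : ∀ a, ¬ I a a)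
    (u v : TM I) (lc ld : List (Finset α))
    (hlc : ∀ c ∈ lc, (c : Finset α).Nonempty ∧ IsCliq I c)
    (hcc : lc.Chain' (CFadm I)) (hpc : (lc.map (ctr I)).prod = u)
    (hld : ∀ c ∈ ld, (c : Finset α).Nonempty ∧ IsCliq I c)
    (hcd : ld.Chain' (CFadm I)) (hpd : (ld.map (ctr I)).prod = v) :
    pref I u v ↔
      lc.length ≤ ld.length ∧
      ∃! γ : List (Finset α), γ.length = lc.length ∧
        (∀ i < lc.length, IsCliq I (γ.getD i ∅) ∧
          ctr I (ld.getD i ∅) = ctr I (lc.getD i ∅) * ctr I (γ.getD i ∅)) ∧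
        (∀ i j : ℕ, i ≤ j → j < lc.length → Par I (γ.getD i ∅) (lc.getD j ∅)) := by
  subst hpc hpd
  constructor
  · intro hpref
    obtain ⟨hlen, γ, hγlen, hγprop, hγpar⟩ :=
      CFwork.main_exists hsymm hirr lc ld hlc hcc hld hcd hpref
    refine ⟨hlen, γ, ⟨hγlen, hγprop, hγpar⟩, ?_⟩
    rintro γ'' ⟨hl'', hp'', -⟩
    apply List.ext_getElem (by rw [hl'', hγlen])
    intro i h₁ h₂
    have hi : i < lc.length := by rw [hl''] at h₁; exact h₁
    have e1 := (hp'' i hi).2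
    have e2 := (hγprop i hi).2
    have h3 : ctr I (γ''.getD i ∅) = ctr I (γ.getD i ∅) :=
      CFwork.cancel_left hsymm (by rw [← e1, ← e2])
    have h4 := CFwork.ctr_inj h3
    rw [List.getD_eq_getElem _ _ h₁, List.getD_eq_getElem _ _ h₂] at h4
    exact h4
  · rintro ⟨hlen, γ, ⟨hγlen, hγprop, hγpar⟩, -⟩
    exact CFwork.main_back hsymm lc ld γ hγlen hlen (fun i hi => (hγprop i hi).2) hγpar
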